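/- Let A ∈ ℝ^{n×n}, B ∈ ℝ^{n×m}, and let l be a {0,1}-valued process adapted to the filtration (𝓕_i) that is an irreducible time-homogeneous Markov chain on {0,1}: there are constants p_{0,1} ∈ (0,1] and p_{1,1} ∈ [0,1) with p_{1,0} := 1 − p_{1,1} ∈ (0,1] such that for every i ∈ ℕ, P(l(i+1) = 1 ∣ 𝓕_i) = (1 − l(i))·p_{0,1} + l(i)·p_{1,1} almost surely. Set ρ := p_{0,1}/(p_{0,1} + p_{1,0}). If there exist a matrix K ∈ ℝ^{m×n}, a symmetric positive-definite matrix P ∈ ℝ^{n×n}, and scalars β ∈ (0,1) and φ ∈ [1,∞) such that (A+BK)ᵀP(A+BK) − βP is negative semidefinite, AᵀPA − φP is negative semidefinite, and (1−ρ)·ln β + ρ·ln φ < 0, then for any integer θ ≥ 1 the event-triggered closed loop defined by these data is almost surely asymptotically stable, i.e.: (i) for every ε > 0 and p̄ > 0 there exists δ > 0 such that whenever the initial state satisfies ‖x₀‖ < δ, one has P( sup_{t∈ℕ} ‖x(t)‖ > ε ) < p̄; and (ii) for every initial state x₀, P( lim_{t→∞} ‖x(t)‖ = 0 ) = 1. 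-/

import Mathlib

open MeasureTheory Filter Matrix

/-- The quadratic Lyapunov-like function `V(z) = zᵀ P z`. -/
noncomputable def lyapV {n : ℕ} (P : Matrix (Fin n) (Fin n) ℝ) (z : Fin n → ℝ) : ℝ :=
  z ⬝ᵥ P.mulVec z

/-- Sample-path description of the event-triggered closed loop. -/
def IsEventTriggeredLoop {n m : ℕ} (A : Matrix (Fin n) (Fin n) ℝ)
    (B : Matrix (Fin n) (Fin m) ℝ) (K : Matrix (Fin m) (Fin n) ℝ)
    (P : Matrix (Fin n) (Fin n) ℝ) (β : ℝ) (θ : ℕ) (l : ℕ → ℝ)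
    (x₀ : Fin n → ℝ) (τ : ℕ → ℕ) (x : ℕ → Fin n → ℝ) : Prop :=
  τ 0 = 0 ∧ x 0 = x₀ ∧
  (∀ i t, τ i ≤ t → t < τ (i + 1) →
    x (t + 1) = A.mulVec (x t) + B.mulVec ((1 - l i) • K.mulVec (x (τ i)))) ∧
  (∀ i, τ (i + 1) = sInf {t : ℕ | τ i < t ∧ (τ i + θ ≤ t ∨
    β * lyapV P (x (τ i)) <
      lyapV P (A.mulVec (x t) + B.mulVec ((1 - l i) • K.mulVec (x (τ i)))))})


set_option linter.unusedSectionVars false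
set_option linter.unusedVariables false
set_option maxHeartbeats 1000000

lemma lyapV_nonneg {n : ℕ} {P : Matrix (Fin n) (Fin n) ℝ} (hP : P.PosSemidef)
    (z : Fin n → ℝ) : 0 ≤ lyapV P z := by
  have := hP.dotProduct_mulVec_nonneg z
  simpa [lyapV] using this

lemma lyapV_smul {n : ℕ} (P : Matrix (Fin n) (Fin n) ℝ) (a : ℝ) (z : Fin n → ℝ) :
    lyapV P (a • z) = a ^ 2 * lyapV P z := by
  simp [lyapV, Matrix.mulVec_smul, smul_dotProduct, dotProduct_smul, sq]
  ring

lemma lyapV_mulVec_le {n : ℕ} {P M : Matrix (Fin n) (Fin n) ℝ} {a : ℝ}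
    (h : (a • P - Mᵀ * P * M).PosSemidef) (z : Fin n → ℝ) :
    lyapV P (M.mulVec z) ≤ a * lyapV P z := by
  have h2 := h.dotProduct_mulVec_nonneg z
  have e1 : z ⬝ᵥ (Mᵀ * P * M) *ᵥ z = lyapV P (M *ᵥ z) := by
    rw [Matrix.mul_assoc, ← Matrix.mulVec_mulVec, Matrix.dotProduct_mulVec,
      Matrix.vecMul_transpose, ← Matrix.mulVec_mulVec]
    simp [lyapV]
  have e2 : star z ⬝ᵥ (a • P - Mᵀ * P * M) *ᵥ z = a * lyapV P z - lyapV P (M *ᵥ z) := by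
    rw [star_trivial, Matrix.sub_mulVec, dotProduct_sub, e1,
      Matrix.smul_mulVec, dotProduct_smul, smul_eq_mul]
    simp [lyapV]
  rw [e2] at h2
  linarith

lemma lyapV_continuous {n : ℕ} (P : Matrix (Fin n) (Fin n) ℝ) :
    Continuous fun z : Fin n → ℝ => lyapV P z := by
  simp only [lyapV, dotProduct, Matrix.mulVec]
  exact continuous_finset_sum _ fun i _ =>
    (continuous_apply i).mul (continuous_finset_sum _ fun j _ =>
      continuous_const.mul (continuous_apply j))

lemma lyapV_le_const_mul {n : ℕ} (P : Matrix (Fin n) (Fin n) ℝ) (z : Fin n → ℝ) :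
    lyapV P z ≤ (∑ i, ∑ j, |P i j|) * ‖z‖ ^ 2 := by
  have hz : ∀ i, |z i| ≤ ‖z‖ := fun i => by
    have := norm_le_pi_norm z i
    simpa using this
  have hzn : (0:ℝ) ≤ ‖z‖ := norm_nonneg _
  calc lyapV P z = ∑ i, ∑ j, z i * (P i j * z j) := by
        simp [lyapV, dotProduct, Matrix.mulVec, Finset.mul_sum]
    _ ≤ ∑ i, ∑ j, |P i j| * ‖z‖ ^ 2 := by
        refine Finset.sum_le_sum fun i _ => Finset.sum_le_sum fun j _ => ?_
        calc z i * (P i j * z j) ≤ |z i * (P i j * z j)| := le_abs_self _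
          _ = |P i j| * (|z i| * |z j|) := by rw [abs_mul, abs_mul]; ring
          _ ≤ |P i j| * (‖z‖ * ‖z‖) := by
              refine mul_le_mul_of_nonneg_left ?_ (abs_nonneg _)
              exact mul_le_mul (hz i) (hz j) (abs_nonneg _) hzn
          _ = |P i j| * ‖z‖ ^ 2 := by ring
    _ = (∑ i, ∑ j, |P i j|) * ‖z‖ ^ 2 := by rw [Finset.sum_mul]; simp [Finset.sum_mul]

lemma exists_lyapV_lower {n : ℕ} {P : Matrix (Fin n) (Fin n) ℝ} (hP : P.PosDef) :
    ∃ c > (0:ℝ), ∀ z : Fin n → ℝ, c * ‖z‖ ^ 2 ≤ lyapV P z := by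
  rcases Nat.eq_zero_or_pos n with hn | hn
  · refine ⟨1, one_pos, fun z => ?_⟩
    subst hn
    have hz : z = 0 := Subsingleton.elim _ _
    have h1 : lyapV P z = 0 := by simp [hz, lyapV]
    have h2 : ‖z‖ = 0 := norm_eq_zero.mpr hz
    rw [h1, h2]; norm_num
  · have hsph : (Metric.sphere (0 : Fin n → ℝ) 1).Nonempty := by
      refine ⟨Pi.single ⟨0, hn⟩ 1, ?_⟩
      simp [Pi.norm_single]
    obtain ⟨z₀, hz₀m, hz₀min⟩ := (isCompact_sphere (0 : Fin n → ℝ) 1).exists_isMinOn hsph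
      ((lyapV_continuous P).continuousOn)
    have hz₀norm : ‖z₀‖ = 1 := by simpa using hz₀m
    have hz₀ne : z₀ ≠ 0 := by
      intro h; rw [h] at hz₀norm; simp at hz₀norm
    have hc : 0 < lyapV P z₀ := by
      have := hP.dotProduct_mulVec_pos hz₀ne
      simpa [lyapV] using this
    refine ⟨lyapV P z₀, hc, fun z => ?_⟩
    rcases eq_or_ne z 0 with rfl | hz
    · simp [lyapV]
    · have hzn : (0:ℝ) < ‖z‖ := norm_pos_iff.2 hz
      set u : Fin n → ℝ := ‖z‖⁻¹ • z with hu
      have hun : ‖u‖ = 1 := by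
        rw [hu, norm_smul]
        simp [abs_of_pos (inv_pos.2 hzn), inv_mul_cancel₀ hzn.ne']
      have hmem : u ∈ Metric.sphere (0 : Fin n → ℝ) 1 := by simpa using hun
      have hVu : lyapV P z₀ ≤ lyapV P u := hz₀min hmem
      have : lyapV P z = ‖z‖ ^ 2 * lyapV P u := by
        rw [hu]
        have : z = ‖z‖ • u := by
          rw [hu, smul_smul, mul_inv_cancel₀ hzn.ne', one_smul]
        calc lyapV P z = lyapV P (‖z‖ • u) := by rw [← this]
          _ = ‖z‖ ^ 2 * lyapV P u := lyapV_smul P _ u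
      rw [this, mul_comm (lyapV P z₀) _]
      have h2 : (0:ℝ) ≤ ‖z‖ ^ 2 := sq_nonneg _
      exact mul_le_mul_of_nonneg_left hVu h2

section Loop

variable {n m : ℕ} {A : Matrix (Fin n) (Fin n) ℝ} {B : Matrix (Fin n) (Fin m) ℝ}
  {K : Matrix (Fin m) (Fin n) ℝ} {P : Matrix (Fin n) (Fin n) ℝ}
  {β φ : ℝ} {θ : ℕ} {l : ℕ → ℝ} {x₀ : Fin n → ℝ} {τ : ℕ → ℕ} {x : ℕ → Fin n → ℝ}

lemma loop_V_bounds (hP : P.PosDef)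
    (hβ : β ∈ Set.Ioo (0:ℝ) 1) (hφ : 1 ≤ φ)
    (hLMI1 : (β • P - (A + B * K)ᵀ * P * (A + B * K)).PosSemidef)
    (hLMI2 : (φ • P - Aᵀ * P * A).PosSemidef)
    (hθ : 1 ≤ θ) (hl : ∀ i, l i = 0 ∨ l i = 1)
    (hloop : IsEventTriggeredLoop A B K P β θ l x₀ τ x) :
    (∀ i, τ i < τ (i + 1) ∧ τ (i + 1) ≤ τ i + θ) ∧
    (∀ i, lyapV P (x (τ (i + 1))) ≤ (if l i = 0 then β else φ) * lyapV P (x (τ i))) ∧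
    (∀ i t, τ i ≤ t → t ≤ τ (i + 1) → lyapV P (x t) ≤ φ * lyapV P (x (τ i))) := by
  obtain ⟨hτ0, hx0, hdyn, htrig⟩ := hloop
  -- basic interval structure
  have hstruct : ∀ i, τ i < τ (i + 1) ∧ τ (i + 1) ≤ τ i + θ := by
    intro i
    have hne : {t : ℕ | τ i < t ∧ (τ i + θ ≤ t ∨
        β * lyapV P (x (τ i)) <
          lyapV P (A.mulVec (x t) + B.mulVec ((1 - l i) • K.mulVec (x (τ i)))))}.Nonempty :=
      ⟨τ i + θ, ⟨by omega, Or.inl le_rfl⟩⟩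
    have hmem := Nat.sInf_mem hne
    rw [← htrig i] at hmem
    refine ⟨hmem.1, ?_⟩
    rw [htrig i]
    exact Nat.sInf_le ⟨by omega, Or.inl le_rfl⟩
  refine ⟨hstruct, ?_⟩
  -- one-step bound
  have hone : ∀ i, lyapV P (x (τ i + 1)) ≤ (if l i = 0 then β else φ) * lyapV P (x (τ i)) := by
    intro i
    have hx1 : x (τ i + 1) = A.mulVec (x (τ i)) + B.mulVec ((1 - l i) • K.mulVec (x (τ i))) :=
      hdyn i (τ i) le_rfl (hstruct i).1
    rcases hl i with h0 | h1
    · have : x (τ i + 1) = (A + B * K).mulVec (x (τ i)) := by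
        rw [hx1, h0]
        simp [Matrix.add_mulVec, Matrix.mulVec_mulVec]
      rw [this, if_pos h0]
      exact lyapV_mulVec_le hLMI1 _
    · have : x (τ i + 1) = A.mulVec (x (τ i)) := by
        rw [hx1, h1]
        simp
      rw [this, if_neg (by rw [h1]; norm_num)]
      exact lyapV_mulVec_le hLMI2 _
  -- middle bound : strictly inside the interval the event condition fails
  have hmid : ∀ i t, τ i + 1 < t → t ≤ τ (i + 1) →
      lyapV P (x t) ≤ β * lyapV P (x (τ i)) := by
    intro i t h1 h2
    have hlt : t - 1 < τ (i + 1) := by omega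
    have hnotmem : t - 1 ∉ {t : ℕ | τ i < t ∧ (τ i + θ ≤ t ∨
        β * lyapV P (x (τ i)) <
          lyapV P (A.mulVec (x t) + B.mulVec ((1 - l i) • K.mulVec (x (τ i)))))} := by
      apply Nat.notMem_of_lt_sInf
      rw [← htrig i]; omega
    have hτlt : τ i < t - 1 := by omega
    have hcond : lyapV P (A.mulVec (x (t - 1)) + B.mulVec ((1 - l i) • K.mulVec (x (τ i))))
        ≤ β * lyapV P (x (τ i)) := by
      by_contra hc
      push_neg at hc
      exact hnotmem ⟨hτlt, Or.inr hc⟩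
    have hxd : x (t - 1 + 1) = A.mulVec (x (t - 1)) + B.mulVec ((1 - l i) • K.mulVec (x (τ i))) :=
      hdyn i (t - 1) (by omega) (by omega)
    have ht1 : t - 1 + 1 = t := by omega
    rw [ht1] at hxd
    rw [hxd]
    exact hcond
  have hVnn : ∀ z, 0 ≤ lyapV P z := lyapV_nonneg hP.posSemidef
  constructor
  · intro i
    rcases Nat.lt_or_ge (τ i + 1) (τ (i + 1)) with h | h
    · have := hmid i (τ (i + 1)) h le_rfl
      have hb : β ≤ (if l i = 0 then β else φ) := by
        split
        · exact le_rfl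
        · linarith [hβ.2]
      calc lyapV P (x (τ (i + 1))) ≤ β * lyapV P (x (τ i)) := this
        _ ≤ (if l i = 0 then β else φ) * lyapV P (x (τ i)) :=
            mul_le_mul_of_nonneg_right hb (hVnn _)
    · have heq : τ (i + 1) = τ i + 1 := by
        have := (hstruct i).1; omega
      rw [heq]; exact hone i
  · intro i t h1 h2
    rcases eq_or_lt_of_le h1 with rfl | h1'
    · nlinarith [hVnn (x (τ i))]
    rcases Nat.lt_or_ge (τ i + 1) t with h | h
    · have := hmid i t h h2
      have hbf : β * lyapV P (x (τ i)) ≤ φ * lyapV P (x (τ i)) :=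
        mul_le_mul_of_nonneg_right (le_trans hβ.2.le hφ) (hVnn _)
      linarith
    · have heq : t = τ i + 1 := by omega
      rw [heq]
      have := hone i
      have hb : (if l i = 0 then β else φ) ≤ φ := by
        split
        · linarith [hβ.2]
        · exact le_rfl
      calc lyapV P (x (τ i + 1)) ≤ (if l i = 0 then β else φ) * lyapV P (x (τ i)) := this
        _ ≤ φ * lyapV P (x (τ i)) := mul_le_mul_of_nonneg_right hb (hVnn _)

end Loop

section Loop2
variable {n : ℕ} {P : Matrix (Fin n) (Fin n) ℝ} {β φ : ℝ} {θ : ℕ} {l : ℕ → ℝ}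
  {x₀ : Fin n → ℝ} {τ : ℕ → ℕ} {x : ℕ → Fin n → ℝ} {V : (Fin n → ℝ) → ℝ}

lemma loop_V_prod (hVnn : ∀ z, 0 ≤ V z) (hβpos : 0 < β) (hφpos : 0 < φ)
    (hτ0 : τ 0 = 0) (hx0 : x 0 = x₀)
    (hstep : ∀ i, V (x (τ (i + 1))) ≤ (if l i = 0 then β else φ) * V (x (τ i))) :
    ∀ i, V (x (τ i)) ≤ (∏ j ∈ Finset.range i, (if l j = 0 then β else φ)) * V x₀ := by
  intro i
  induction i with
  | zero => simp [hτ0, hx0]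
  | succ i ih =>
    have hci : (0:ℝ) ≤ (if l i = 0 then β else φ) := by split <;> positivity
    calc V (x (τ (i + 1))) ≤ (if l i = 0 then β else φ) * V (x (τ i)) := hstep i
      _ ≤ (if l i = 0 then β else φ) *
          ((∏ j ∈ Finset.range i, (if l j = 0 then β else φ)) * V x₀) :=
        mul_le_mul_of_nonneg_left ih hci
      _ = (∏ j ∈ Finset.range (i + 1), (if l j = 0 then β else φ)) * V x₀ := by
        rw [Finset.prod_range_succ]; ring

lemma tau_lower (hτ0 : τ 0 = 0) (hstruct : ∀ i, τ i < τ (i + 1)) : ∀ i, i ≤ τ i := by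
  intro i
  induction i with
  | zero => omega
  | succ i ih => have := hstruct i; omega

lemma tau_upper (hτ0 : τ 0 = 0) (hstruct : ∀ i, τ (i + 1) ≤ τ i + θ) : ∀ i, τ i ≤ θ * i := by
  intro i
  induction i with
  | zero => omega
  | succ i ih => have := hstruct i; have : θ * (i+1) = θ * i + θ := by ring
                 omega

lemma findGreatest_tau (hτ0 : τ 0 = 0) (hstruct : ∀ i, τ i < τ (i + 1)) (t : ℕ) :
    τ (Nat.findGreatest (fun k => τ k ≤ t) t) ≤ t ∧
    t < τ (Nat.findGreatest (fun k => τ k ≤ t) t + 1) := by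
  set i := Nat.findGreatest (fun k => τ k ≤ t) t with hi
  have h1 : τ i ≤ t := Nat.findGreatest_spec (P := fun k => τ k ≤ t) (Nat.zero_le t) (by beta_reduce; rw [show τ 0 = 0 from hτ0]; omega)
  refine ⟨h1, ?_⟩
  by_cases hle : i + 1 ≤ t
  · have hgt : i < i + 1 := lt_add_one i
    have := Nat.findGreatest_is_greatest (P := fun k => τ k ≤ t) (hi ▸ hgt) hle
    omega
  · have := tau_lower hτ0 hstruct (i + 1)
    omega

end Loop2

lemma eventually_lt_one_of_deriv_neg {g : ℝ → ℝ} {d : ℝ}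
    (hg : HasDerivAt g d 0) (hd : d < 0) (hg0 : g 0 = 1) :
    ∀ᶠ s in nhdsWithin 0 (Set.Ioi 0), g s < 1 := by
  have h := hasDerivAt_iff_tendsto_slope.mp hg
  have h2 : Tendsto (slope g 0) (nhdsWithin 0 (Set.Ioi 0)) (nhds d) :=
    h.mono_left (nhdsWithin_mono _ (fun x hx => Set.mem_compl_singleton_iff.mpr
      (ne_of_gt hx)))
  have h3 : ∀ᶠ s in nhdsWithin 0 (Set.Ioi 0), slope g 0 s < 0 :=
    h2.eventually_lt_const hd
  filter_upwards [h3, self_mem_nhdsWithin] with s hs hs0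
  have hs0' : (0:ℝ) < s := hs0
  rw [slope_def_field] at hs
  have : (g s - g 0) / (s - 0) < 0 := hs
  rw [sub_zero] at this
  rcases div_neg_iff.mp this with ⟨h5, h6⟩ | ⟨h5, h6⟩
  · linarith
  · linarith

lemma exists_tilt (p01 p11 β φ : ℝ) (hp01 : p01 ∈ Set.Ioc (0:ℝ) 1)
    (hp11 : p11 ∈ Set.Ico (0:ℝ) 1)
    (hβ : β ∈ Set.Ioo (0:ℝ) 1) (hφ : 1 ≤ φ)
    (hrate : (1 - p01 / (p01 + (1 - p11))) * Real.log β
      + (p01 / (p01 + (1 - p11))) * Real.log φ < 0) :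
    ∃ s : ℝ, 0 < s ∧ ∃ γ : ℝ, 0 < γ ∧ ∃ lam : ℝ, 0 < lam ∧ lam < 1 ∧
      Real.exp (s * Real.log β) * ((1 - p01) + p01 * Real.exp (s * γ)) ≤ lam ∧
      Real.exp (s * Real.log φ) * ((1 - p11) + p11 * Real.exp (s * γ))
        ≤ lam * Real.exp (s * γ) := by
  obtain ⟨hp01pos, hp01le⟩ := hp01
  obtain ⟨hp11nonneg, hp11lt⟩ := hp11
  have hp10 : 0 < 1 - p11 := by linarith
  set p10 := 1 - p11 with hp10def
  have hS : 0 < p01 + p10 := by linarith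
  have hlogβ : Real.log β < 0 := Real.log_neg hβ.1 hβ.2
  have hlogφ : 0 ≤ Real.log φ := Real.log_nonneg hφ
  -- key inequality
  have hkey : p10 * Real.log β + p01 * Real.log φ < 0 := by
    have h1 : 1 - p01 / (p01 + p10) = p10 / (p01 + p10) := by field_simp; ring
    rw [h1, div_mul_eq_mul_div, div_mul_eq_mul_div, ← add_div] at hrate
    rcases div_neg_iff.mp hrate with ⟨_, h6⟩ | ⟨h5, _⟩
    · linarith
    · exact h5
  -- choose γ between log φ / p10 and (- log β) / p01
  have hfrac : Real.log φ / p10 < (- Real.log β) / p01 := by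
    rw [div_lt_div_iff₀ hp10 hp01pos]
    nlinarith
  set γ : ℝ := (Real.log φ / p10 + (- Real.log β) / p01) / 2 with hγdef
  have hγ1 : Real.log φ / p10 < γ := by rw [hγdef]; linarith
  have hγ2 : γ < (- Real.log β) / p01 := by rw [hγdef]; linarith
  have hγpos : 0 < γ := by
    have h0 : 0 ≤ Real.log φ / p10 := div_nonneg hlogφ hp10.le
    linarith
  have hd0 : Real.log β + p01 * γ < 0 := by
    have := (lt_div_iff₀ hp01pos).mp hγ2
    linarith [mul_comm p01 γ]
  have hd1 : Real.log φ - p10 * γ < 0 := by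
    have := (div_lt_iff₀ hp10).mp hγ1
    linarith [mul_comm p10 γ]
  -- the two smoothness functions
  set g0 : ℝ → ℝ := fun s => Real.exp (s * Real.log β) * ((1 - p01) + p01 * Real.exp (s * γ))
    with hg0def
  set g1 : ℝ → ℝ := fun s => Real.exp (s * Real.log φ)
    * ((1 - p11) * Real.exp (-(s * γ)) + p11) with hg1def
  have hder0 : HasDerivAt g0 (Real.log β + p01 * γ) 0 := by
    have h1 : HasDerivAt (fun s : ℝ => Real.exp (s * Real.log β)) (Real.log β) 0 := by
      have := ((hasDerivAt_id (0:ℝ)).mul_const (Real.log β)).exp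
      simpa using this
    have h2 : HasDerivAt (fun s : ℝ => (1 - p01) + p01 * Real.exp (s * γ)) (p01 * γ) 0 := by
      have hb : HasDerivAt (fun s : ℝ => Real.exp (s * γ)) γ 0 := by
        have := ((hasDerivAt_id (0:ℝ)).mul_const γ).exp
        simpa using this
      have := (hb.const_mul p01).const_add (1 - p01)
      simpa [mul_comm] using this
    have := h1.mul h2
    simpa [hg0def, Pi.mul_def] using this.congr_deriv (by simp; try ring)
  have hder1 : HasDerivAt g1 (Real.log φ - p10 * γ) 0 := by
    have h1 : HasDerivAt (fun s : ℝ => Real.exp (s * Real.log φ)) (Real.log φ) 0 := by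
      have := ((hasDerivAt_id (0:ℝ)).mul_const (Real.log φ)).exp
      simpa using this
    have h2 : HasDerivAt (fun s : ℝ => (1 - p11) * Real.exp (-(s * γ)) + p11)
        (-((1 - p11) * γ)) 0 := by
      have hb : HasDerivAt (fun s : ℝ => Real.exp (-(s * γ))) (-γ) 0 := by
        have := (((hasDerivAt_id (0:ℝ)).mul_const γ).neg).exp
        simpa using this
      have := (hb.const_mul (1 - p11)).add_const p11
      simpa [mul_comm] using this
      -- derivative: (1-p11) * (-γ)
    have := h1.mul h2
    simpa [hg1def, hp10def, Pi.mul_def] using this.congr_deriv (by simp; try ring)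
  have hg00 : g0 0 = 1 := by simp [hg0def]
  have hg10 : g1 0 = 1 := by simp [hg1def]
  have hev0 := eventually_lt_one_of_deriv_neg hder0 hd0 hg00
  have hev1 := eventually_lt_one_of_deriv_neg hder1 hd1 hg10
  have hev : ∀ᶠ s in nhdsWithin 0 (Set.Ioi 0), g0 s < 1 ∧ g1 s < 1 ∧ (0:ℝ) < s := by
    filter_upwards [hev0, hev1, self_mem_nhdsWithin] with s h1 h2 h3
    exact ⟨h1, h2, h3⟩
  obtain ⟨s, hs0, hs1, hspos⟩ := hev.exists
  refine ⟨s, hspos, γ, hγpos, max (g0 s) (g1 s), ?_, max_lt hs0 hs1, ?_, ?_⟩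
  · have hb : 0 < 1 - p01 + p01 * Real.exp (s * γ) := by
      nlinarith [Real.exp_pos (s * γ)]
    have hg0pos : 0 < g0 s := mul_pos (Real.exp_pos _) hb
    exact lt_max_of_lt_left hg0pos
  · show g0 s ≤ _
    exact le_max_left _ _
  · show Real.exp (s * Real.log φ) * ((1 - p11) + p11 * Real.exp (s * γ)) ≤ _
    have hexp : Real.exp (-(s * γ)) * Real.exp (s * γ) = 1 := by
      rw [← Real.exp_add]; simp
    have heq : g1 s * Real.exp (s * γ)
        = Real.exp (s * Real.log φ) * ((1 - p11) + p11 * Real.exp (s * γ)) := by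
      show Real.exp (s * Real.log φ) * ((1 - p11) * Real.exp (-(s * γ)) + p11)
          * Real.exp (s * γ) = _
      calc Real.exp (s * Real.log φ) * ((1 - p11) * Real.exp (-(s * γ)) + p11)
            * Real.exp (s * γ)
          = Real.exp (s * Real.log φ)
            * ((1 - p11) * (Real.exp (-(s * γ)) * Real.exp (s * γ))
              + p11 * Real.exp (s * γ)) := by ring
        _ = _ := by rw [hexp]; ring
    rw [← heq]
    exact mul_le_mul_of_nonneg_right (le_max_right _ _) (Real.exp_pos _).le

section Mart
variable {Ω : Type*} [MeasurableSpace Ω] {μ : Measure Ω} [IsProbabilityMeasure μ]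
  {ℱ : Filtration ℕ (inferInstance : MeasurableSpace Ω)}
  {l : ℕ → Ω → ℝ} {p01 p11 β φ s γ lam : ℝ}

/-- the per-step factor in log scale -/
noncomputable def logcF (β φ : ℝ) : ℝ → ℝ := fun r => if r = 0 then Real.log β else Real.log φ
/-- the weight -/
noncomputable def wF (s γ : ℝ) : ℝ → ℝ := fun r => if r = 0 then 1 else Real.exp (s * γ)
/-- the tilted supermartingale -/
noncomputable def MM (β φ s γ : ℝ) (l : ℕ → Ω → ℝ) (i : ℕ) (ω : Ω) : ℝ :=
  Real.exp (s * ∑ j ∈ Finset.range i, logcF β φ (l j ω)) * wF s γ (l i ω)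

lemma logcF_meas : Measurable (logcF β φ) :=
  Measurable.ite (measurableSet_eq) measurable_const measurable_const

lemma wF_meas : Measurable (wF s γ) :=
  Measurable.ite (measurableSet_eq) measurable_const measurable_const

lemma MM_pos (hβ : 0 < β) (hφ : 0 < φ) (i : ℕ) (ω : Ω) : 0 < MM β φ s γ l i ω := by
  unfold MM wF
  have : (0:ℝ) < if l i ω = 0 then 1 else Real.exp (s * γ) := by
    split
    · norm_num
    · exact Real.exp_pos _
  exact mul_pos (Real.exp_pos _) this

lemma MM_le_bound (hβ : β ∈ Set.Ioo (0:ℝ) 1) (hφ : 1 ≤ φ) (hs : 0 < s) (hγ : 0 < γ)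
    (i : ℕ) (ω : Ω) :
    MM β φ s γ l i ω ≤ Real.exp (s * (i * Real.log φ)) * Real.exp (s * γ) := by
  unfold MM wF
  have hlogφ : 0 ≤ Real.log φ := Real.log_nonneg hφ
  have h1 : ∑ j ∈ Finset.range i, logcF β φ (l j ω) ≤ i * Real.log φ := by
    calc ∑ j ∈ Finset.range i, logcF β φ (l j ω) ≤ ∑ j ∈ Finset.range i, Real.log φ := by
          refine Finset.sum_le_sum fun j _ => ?_
          unfold logcF
          split
          · linarith [Real.log_neg hβ.1 hβ.2]
          · exact le_rfl
      _ = i * Real.log φ := by simp [Finset.sum_const, nsmul_eq_mul]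
  have h2 : (if l i ω = 0 then (1:ℝ) else Real.exp (s * γ)) ≤ Real.exp (s * γ) := by
    split
    · exact Real.one_le_exp (by positivity)
    · exact le_rfl
  have h3 : Real.exp (s * ∑ j ∈ Finset.range i, logcF β φ (l j ω))
      ≤ Real.exp (s * (i * Real.log φ)) := by
    apply Real.exp_le_exp.mpr
    exact mul_le_mul_of_nonneg_left h1 hs.le
  have h4 : (0:ℝ) < if l i ω = 0 then 1 else Real.exp (s * γ) := by
    split
    · norm_num
    · exact Real.exp_pos _
  calc Real.exp (s * ∑ j ∈ Finset.range i, logcF β φ (l j ω))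
        * (if l i ω = 0 then (1:ℝ) else Real.exp (s * γ))
      ≤ Real.exp (s * (i * Real.log φ)) * (if l i ω = 0 then (1:ℝ) else Real.exp (s * γ)) :=
        mul_le_mul_of_nonneg_right h3 h4.le
    _ ≤ Real.exp (s * (i * Real.log φ)) * Real.exp (s * γ) :=
        mul_le_mul_of_nonneg_left h2 (Real.exp_pos _).le

lemma MM_measF (hadapted : Adapted ℱ l) (i : ℕ) :
    StronglyMeasurable[ℱ i] (MM β φ s γ l i) := by
  have hsum : Measurable[ℱ i] fun ω => ∑ j ∈ Finset.range i, logcF β φ (l j ω) := by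
    apply Finset.measurable_sum
    intro j hj
    have hj' : j ≤ i := le_of_lt (Finset.mem_range.mp hj)
    exact logcF_meas.comp ((hadapted j).mono (ℱ.mono hj') le_rfl)
  have hw : Measurable[ℱ i] fun ω => wF s γ (l i ω) :=
    wF_meas.comp (hadapted i)
  exact ((Real.measurable_exp.comp (hsum.const_mul s)).mul hw).stronglyMeasurable

lemma MM_integrable (hβ : β ∈ Set.Ioo (0:ℝ) 1) (hφ : 1 ≤ φ) (hs : 0 < s) (hγ : 0 < γ)
    (hadapted : Adapted ℱ l) (i : ℕ) :
    Integrable (MM β φ s γ l i) μ := by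
  refine Integrable.mono' (integrable_const (Real.exp (s * (i * Real.log φ))
    * Real.exp (s * γ))) ?_ ?_
  · exact ((MM_measF hadapted i).mono (ℱ.le i)).aestronglyMeasurable
  · refine Filter.Eventually.of_forall fun ω => ?_
    rw [Real.norm_eq_abs, abs_of_pos (MM_pos hβ.1 (by linarith) i ω)]
    exact MM_le_bound hβ hφ hs hγ i ω


lemma MM_condexp_step (hβ : β ∈ Set.Ioo (0:ℝ) 1) (hφ : 1 ≤ φ) (hs : 0 < s) (hγ : 0 < γ)
    (hadapted : Adapted ℱ l)
    (h01 : ∀ i ω, l i ω = 0 ∨ l i ω = 1)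
    (hmarkov : ∀ i, (μ[Set.indicator {ω | l (i + 1) ω = 1} (fun _ => (1 : ℝ)) | ℱ i])
      =ᵐ[μ] fun ω => (1 - l i ω) * p01 + l i ω * p11)
    (hlam0 : Real.exp (s * Real.log β) * ((1 - p01) + p01 * Real.exp (s * γ)) ≤ lam)
    (hlam1 : Real.exp (s * Real.log φ) * ((1 - p11) + p11 * Real.exp (s * γ))
        ≤ lam * Real.exp (s * γ)) (i : ℕ) :
    μ[MM β φ s γ l (i+1) | ℱ i] ≤ᵐ[μ] fun ω => lam * MM β φ s γ l i ω := by
  have hφpos : (0:ℝ) < φ := by linarith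
  set G : Ω → ℝ := fun ω => Real.exp (s * ∑ j ∈ Finset.range (i+1), logcF β φ (l j ω)) with hG
  set W : Ω → ℝ := fun ω => wF s γ (l (i+1) ω) with hW
  have hMeq : MM β φ s γ l (i+1) = G * W := rfl
  have hGmeas : StronglyMeasurable[ℱ i] G := by
    apply Measurable.stronglyMeasurable
    apply Real.measurable_exp.comp
    apply Measurable.const_mul
    apply Finset.measurable_sum
    intro j hj
    have hj' : j ≤ i := by have := Finset.mem_range.mp hj; omega
    exact logcF_meas.comp ((hadapted j).mono (ℱ.mono hj') le_rfl)
  have hlmeas : Measurable (l (i+1)) := (hadapted (i+1)).mono (ℱ.le (i+1)) le_rfl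
  have hWmeas : Measurable W := wF_meas.comp hlmeas
  have hWbd : ∀ ω, ‖W ω‖ ≤ Real.exp (s * γ) := by
    intro ω
    have hWw : W ω = if l (i+1) ω = 0 then 1 else Real.exp (s * γ) := rfl
    rw [hWw, Real.norm_eq_abs]
    split
    · rw [abs_one]; exact Real.one_le_exp (by positivity)
    · rw [abs_of_pos (Real.exp_pos _)]
  have hWint : Integrable W μ :=
    Integrable.mono' (integrable_const _) hWmeas.aestronglyMeasurable
      (Filter.Eventually.of_forall hWbd)
  have hGWint : Integrable (G * W) μ := hMeq ▸ MM_integrable hβ hφ hs hγ hadapted (i+1)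
  have hpull : μ[G * W | ℱ i] =ᵐ[μ] G * μ[W | ℱ i] :=
    condExp_mul_of_stronglyMeasurable_left hGmeas hGWint hWint
  -- decompose W
  set ind : Ω → ℝ := Set.indicator {ω | l (i + 1) ω = 1} (fun _ => (1 : ℝ)) with hind
  have hindmeas : MeasurableSet {ω | l (i + 1) ω = 1} := hlmeas measurableSet_eq
  have hind_int : Integrable ind μ := by
    rw [hind]
    exact (integrable_const (1:ℝ)).indicator hindmeas
  have hWdecomp : W = (fun _ => (1:ℝ)) + (Real.exp (s * γ) - 1) • ind := by
    funext ω
    rcases h01 (i+1) ω with h | h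
    · have hne : ω ∉ {ω | l (i + 1) ω = 1} := by
        simp only [Set.mem_setOf_eq, h]; norm_num
      simp [hW, wF, h, hind, Set.indicator_of_notMem hne]
    · have hmem : ω ∈ {ω | l (i + 1) ω = 1} := h
      have hne : l (i+1) ω ≠ 0 := by rw [h]; norm_num
      simp [hW, wF, hne, hind, Set.indicator_of_mem hmem]
      try ring
  have hcondW : μ[W | ℱ i] =ᵐ[μ]
      fun ω => 1 + (Real.exp (s * γ) - 1) * ((1 - l i ω) * p01 + l i ω * p11) := by
    rw [hWdecomp]
    have h1 := condExp_add (m := ℱ i) (μ := μ) (integrable_const (1:ℝ)) (hind_int.smul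
      (Real.exp (s * γ) - 1))
    refine h1.trans ?_
    have h2 : μ[(fun _ => (1:ℝ)) | ℱ i] = fun _ => (1:ℝ) := condExp_const (ℱ.le i) 1
    have h3 := condExp_smul (μ := μ) (m := ℱ i) (Real.exp (s * γ) - 1) ind
    filter_upwards [h3, hmarkov i] with ω hω hmω
    simp only [Pi.add_apply, h2, Pi.smul_apply, smul_eq_mul]
    rw [hω]
    simp only [Pi.smul_apply, smul_eq_mul]
    rw [hmω]
  -- combine
  rw [hMeq]
  filter_upwards [hpull, hcondW] with ω h1 h2
  rw [h1]
  simp only [Pi.mul_apply]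
  rw [h2]
  -- pointwise estimate
  have hsplit : G ω = Real.exp (s * ∑ j ∈ Finset.range i, logcF β φ (l j ω))
      * Real.exp (s * logcF β φ (l i ω)) := by
    rw [hG]
    simp only []
    rw [Finset.sum_range_succ, mul_add, Real.exp_add]
  set E : ℝ := Real.exp (s * ∑ j ∈ Finset.range i, logcF β φ (l j ω)) with hE
  have hEpos : 0 < E := Real.exp_pos _
  rcases h01 i ω with h | h
  · have hlogc : logcF β φ (l i ω) = Real.log β := by unfold logcF; rw [if_pos h]
    have hwf : wF s γ (l i ω) = 1 := by unfold wF; rw [if_pos h]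
    have hq : (1 - l i ω) * p01 + l i ω * p11 = p01 := by rw [h]; ring
    have base : Real.exp (s * Real.log β)
        * (1 + (Real.exp (s * γ) - 1) * p01) ≤ lam := by
      have heq : 1 + (Real.exp (s * γ) - 1) * p01 = (1 - p01) + p01 * Real.exp (s * γ) := by
        ring
      rw [heq]; exact hlam0
    have hMi : MM β φ s γ l i ω = E := by unfold MM; rw [hwf, ← hE]; ring
    calc G ω * (1 + (Real.exp (s * γ) - 1) * ((1 - l i ω) * p01 + l i ω * p11))
        = (Real.exp (s * Real.log β) * (1 + (Real.exp (s * γ) - 1) * p01)) * E := by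
          rw [hsplit, hlogc, hq]; ring
      _ ≤ lam * E := mul_le_mul_of_nonneg_right base hEpos.le
      _ = lam * MM β φ s γ l i ω := by rw [hMi]
  · have hne : l i ω ≠ 0 := by rw [h]; norm_num
    have hlogc : logcF β φ (l i ω) = Real.log φ := by unfold logcF; rw [if_neg hne]
    have hwf : wF s γ (l i ω) = Real.exp (s * γ) := by unfold wF; rw [if_neg hne]
    have hq : (1 - l i ω) * p01 + l i ω * p11 = p11 := by rw [h]; ring
    have base : Real.exp (s * Real.log φ)
        * (1 + (Real.exp (s * γ) - 1) * p11) ≤ lam * Real.exp (s * γ) := by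
      have heq : 1 + (Real.exp (s * γ) - 1) * p11 = (1 - p11) + p11 * Real.exp (s * γ) := by
        ring
      rw [heq]; exact hlam1
    have hMi : MM β φ s γ l i ω = E * Real.exp (s * γ) := by unfold MM; rw [hwf, ← hE]
    calc G ω * (1 + (Real.exp (s * γ) - 1) * ((1 - l i ω) * p01 + l i ω * p11))
        = (Real.exp (s * Real.log φ) * (1 + (Real.exp (s * γ) - 1) * p11)) * E := by
          rw [hsplit, hlogc, hq]; ring
      _ ≤ (lam * Real.exp (s * γ)) * E :=
          mul_le_mul_of_nonneg_right base hEpos.le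
      _ = lam * MM β φ s γ l i ω := by rw [hMi]; ring

lemma MM_integral_decay (hβ : β ∈ Set.Ioo (0:ℝ) 1) (hφ : 1 ≤ φ) (hs : 0 < s) (hγ : 0 < γ)
    (hadapted : Adapted ℱ l) (hlampos : 0 < lam)
    (hstep : ∀ i, μ[MM β φ s γ l (i+1) | ℱ i] ≤ᵐ[μ] fun ω => lam * MM β φ s γ l i ω) :
    ∀ i, ∫ ω, MM β φ s γ l i ω ∂μ ≤ lam ^ i * Real.exp (s * γ) := by
  intro i
  induction i with
  | zero =>
    have hbd : ∀ ω, MM β φ s γ l 0 ω ≤ Real.exp (s * γ) := by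
      intro ω
      have := MM_le_bound (l := l) hβ hφ hs hγ 0 ω
      simpa using this
    calc ∫ ω, MM β φ s γ l 0 ω ∂μ ≤ ∫ _ω, Real.exp (s * γ) ∂μ :=
          integral_mono (MM_integrable hβ hφ hs hγ hadapted 0) (integrable_const _) hbd
      _ = Real.exp (s * γ) := by simp
      _ = lam ^ 0 * Real.exp (s * γ) := by ring
  | succ i ih =>
    have h1 : ∫ ω, MM β φ s γ l (i+1) ω ∂μ = ∫ ω, (μ[MM β φ s γ l (i+1) | ℱ i]) ω ∂μ :=
      (integral_condExp (μ := μ) (f := MM β φ s γ l (i+1)) (ℱ.le i)).symm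
    calc ∫ ω, MM β φ s γ l (i+1) ω ∂μ
        = ∫ ω, (μ[MM β φ s γ l (i+1) | ℱ i]) ω ∂μ := h1
      _ ≤ ∫ ω, lam * MM β φ s γ l i ω ∂μ :=
          integral_mono_ae integrable_condExp
            ((MM_integrable hβ hφ hs hγ hadapted i).const_mul lam) (hstep i)
      _ = lam * ∫ ω, MM β φ s γ l i ω ∂μ := integral_const_mul _ _
      _ ≤ lam * (lam ^ i * Real.exp (s * γ)) := mul_le_mul_of_nonneg_left ih hlampos.le
      _ = lam ^ (i+1) * Real.exp (s * γ) := by ring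

lemma MM_tail (hβ : β ∈ Set.Ioo (0:ℝ) 1) (hφ : 1 ≤ φ) (hs : 0 < s) (hγ : 0 < γ)
    (hadapted : Adapted ℱ l) (hlampos : 0 < lam)
    (hdecay : ∀ i, ∫ ω, MM β φ s γ l i ω ∂μ ≤ lam ^ i * Real.exp (s * γ))
    (a : ℝ) (ha : 0 < a) (i : ℕ) :
    μ {ω | a ≤ MM β φ s γ l i ω} ≤ ENNReal.ofReal (lam ^ i * (Real.exp (s * γ) / a)) := by
  have hmk := mul_meas_ge_le_integral_of_nonneg (μ := μ)
    (Filter.Eventually.of_forall fun ω => (MM_pos hβ.1 (by linarith) i ω).le)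
    (MM_integrable hβ hφ hs hγ hadapted i) a
  have h2 : (μ {ω | a ≤ MM β φ s γ l i ω}).toReal ≤ lam ^ i * (Real.exp (s * γ) / a) := by
    have h3 := le_trans hmk (hdecay i)
    rw [div_eq_mul_inv, ← mul_assoc]
    calc (μ {ω | a ≤ MM β φ s γ l i ω}).toReal
        = a * (μ {ω | a ≤ MM β φ s γ l i ω}).toReal * a⁻¹ := by
          field_simp
      _ ≤ lam ^ i * Real.exp (s * γ) * a⁻¹ := by
          apply mul_le_mul_of_nonneg_right h3 (by positivity)
  calc μ {ω | a ≤ MM β φ s γ l i ω}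
      = ENNReal.ofReal ((μ {ω | a ≤ MM β φ s γ l i ω}).toReal) :=
        (ENNReal.ofReal_toReal (measure_ne_top μ _)).symm
    _ ≤ ENNReal.ofReal (lam ^ i * (Real.exp (s * γ) / a)) := ENNReal.ofReal_le_ofReal h2



lemma MM_ae_tendsto (hβ : β ∈ Set.Ioo (0:ℝ) 1) (hφ : 1 ≤ φ) (hs : 0 < s) (hγ : 0 < γ)
    (hadapted : Adapted ℱ l) (hlampos : 0 < lam) (hlamlt : lam < 1)
    (hdecay : ∀ i, ∫ ω, MM β φ s γ l i ω ∂μ ≤ lam ^ i * Real.exp (s * γ)) :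
    ∀ᵐ ω ∂μ, Tendsto (fun i => MM β φ s γ l i ω) atTop (nhds 0) := by
  have hk : ∀ k : ℕ, ∀ᵐ ω ∂μ, ∀ᶠ i in atTop,
      ω ∉ {ω | (1/((k:ℝ)+1) : ℝ) ≤ MM β φ s γ l i ω} := by
    intro k
    apply ae_eventually_notMem
    have ha : (0:ℝ) < 1/((k:ℝ)+1) := by positivity
    have hb : ∀ i, μ {ω | (1/((k:ℝ)+1) : ℝ) ≤ MM β φ s γ l i ω}
        ≤ ENNReal.ofReal (lam ^ i * (Real.exp (s * γ) / (1/((k:ℝ)+1)))) :=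
      fun i => MM_tail hβ hφ hs hγ hadapted hlampos hdecay _ ha i
    refine ne_top_of_le_ne_top ?_ (ENNReal.tsum_le_tsum hb)
    rw [← ENNReal.ofReal_tsum_of_nonneg (fun i => by positivity)
      ((summable_geometric_of_lt_one hlampos.le hlamlt).mul_right _)]
    exact ENNReal.ofReal_ne_top
  rw [← ae_all_iff] at hk
  filter_upwards [hk] with ω hω
  rw [Metric.tendsto_atTop]
  intro ε hε
  obtain ⟨k, hkε⟩ := exists_nat_one_div_lt hε
  have h2 := hω k
  rw [Filter.eventually_atTop] at h2
  obtain ⟨N, hN⟩ := h2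
  refine ⟨N, fun n hn => ?_⟩
  have h3 := hN n hn
  simp only [Set.mem_setOf_eq, not_le] at h3
  rw [Real.dist_eq, sub_zero, abs_of_pos (MM_pos hβ.1 (by linarith) n ω)]
  calc MM β φ s γ l n ω < 1/((k:ℝ)+1) := h3
    _ < ε := hkε

lemma exp_sum_tendsto {ω : Ω} (hβ : β ∈ Set.Ioo (0:ℝ) 1) (hφ : 1 ≤ φ)
    (hs : 0 < s) (hγ : 0 < γ)
    (hω : Tendsto (fun i => MM β φ s γ l i ω) atTop (nhds 0)) :
    Tendsto (fun i => Real.exp (∑ j ∈ Finset.range i, logcF β φ (l j ω))) atTop (nhds 0) := by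
  set y : ℕ → ℝ := fun i => Real.exp (s * ∑ j ∈ Finset.range i, logcF β φ (l j ω)) with hy
  have hyM : ∀ i, y i ≤ MM β φ s γ l i ω := by
    intro i
    have hwf1 : (1:ℝ) ≤ wF s γ (l i ω) := by
      unfold wF
      split
      · exact le_rfl
      · exact Real.one_le_exp (by positivity)
    calc y i = y i * 1 := (mul_one _).symm
      _ ≤ y i * wF s γ (l i ω) :=
        mul_le_mul_of_nonneg_left hwf1 (Real.exp_pos _).le
      _ = MM β φ s γ l i ω := rfl
  have hytend : Tendsto y atTop (nhds 0) :=
    squeeze_zero (fun i => (Real.exp_pos _).le) hyM hω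
  have hrw : ∀ i, Real.exp (∑ j ∈ Finset.range i, logcF β φ (l j ω)) = (y i) ^ (1/s) := by
    intro i
    rw [hy]
    simp only []
    rw [Real.rpow_def_of_pos (Real.exp_pos _), Real.log_exp]
    congr 1
    field_simp
  have hcomp : Tendsto (fun i => y i ^ (1/s)) atTop (nhds ((0:ℝ) ^ (1/s))) :=
    (Real.continuousAt_rpow_const 0 (1/s) (Or.inr (by positivity))).tendsto.comp hytend
  rw [Real.zero_rpow (by positivity : (0:ℝ) < 1/s).ne'] at hcomp
  exact Tendsto.congr (fun i => (hrw i).symm) hcomp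

end Mart

/-- Corollary 1: almost sure asymptotic stability of the
event-triggered networked control system when packet losses form an irreducible
time-homogeneous Markov chain on `{0,1}` with transition probabilities
`p₀₁, p₁₁`, with `ρ := p₀₁ / (p₀₁ + p₁₀)` and `p₁₀ := 1 − p₁₁`. -/
theorem event_triggered_stability_markov_losses
    {n m : ℕ} (A : Matrix (Fin n) (Fin n) ℝ) (B : Matrix (Fin n) (Fin m) ℝ)
    {Ω : Type*} [MeasurableSpace Ω] (μ : Measure Ω) [IsProbabilityMeasure μ]
    (ℱ : Filtration ℕ (inferInstance : MeasurableSpace Ω))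
    (l : ℕ → Ω → ℝ)
    (h01 : ∀ i ω, l i ω = 0 ∨ l i ω = 1)
    (hadapted : Adapted ℱ l)
    (p01 p11 : ℝ) (hp01 : p01 ∈ Set.Ioc (0 : ℝ) 1) (hp11 : p11 ∈ Set.Ico (0 : ℝ) 1)
    (hmarkov : ∀ i, (μ[Set.indicator {ω | l (i + 1) ω = 1} (fun _ => (1 : ℝ)) | ℱ i])
      =ᵐ[μ] fun ω => (1 - l i ω) * p01 + l i ω * p11)
    (K : Matrix (Fin m) (Fin n) ℝ) (P : Matrix (Fin n) (Fin n) ℝ)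
    (hP : P.PosDef)
    (β φ : ℝ) (hβ : β ∈ Set.Ioo (0 : ℝ) 1) (hφ : 1 ≤ φ)
    (hLMI1 : (β • P - (A + B * K)ᵀ * P * (A + B * K)).PosSemidef)
    (hLMI2 : (φ • P - Aᵀ * P * A).PosSemidef)
    (hrate : (1 - p01 / (p01 + (1 - p11))) * Real.log β
      + (p01 / (p01 + (1 - p11))) * Real.log φ < 0)
    (θ : ℕ) (hθ : 1 ≤ θ) :
    (∀ ε > (0 : ℝ), ∀ pbar > (0 : ℝ), ∃ δ > (0 : ℝ),
      ∀ (x₀ : Fin n → ℝ) (τ : Ω → ℕ → ℕ) (x : Ω → ℕ → Fin n → ℝ),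
        ‖x₀‖ < δ →
        (∀ ω, IsEventTriggeredLoop A B K P β θ (fun i => l i ω) x₀ (τ ω) (x ω)) →
        μ {ω | ∃ t : ℕ, ε < ‖x ω t‖} < ENNReal.ofReal pbar) ∧
    (∀ (x₀ : Fin n → ℝ) (τ : Ω → ℕ → ℕ) (x : Ω → ℕ → Fin n → ℝ),
      (∀ ω, IsEventTriggeredLoop A B K P β θ (fun i => l i ω) x₀ (τ ω) (x ω)) →
      ∀ᵐ ω ∂μ, Tendsto (fun t : ℕ => ‖x ω t‖) atTop (nhds 0)) := by
  -- ### setup: tilting parameters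
  obtain ⟨s, hs, γ, hγ, lam, hlampos, hlamlt, hlam0, hlam1⟩ :=
    exists_tilt p01 p11 β φ hp01 hp11 hβ hφ hrate
  have hφpos : (0:ℝ) < φ := lt_of_lt_of_le one_pos hφ
  obtain ⟨c, hc, hlow⟩ := exists_lyapV_lower hP
  set Cup : ℝ := (∑ i, ∑ j, |P i j|) + 1 with hCupdef
  have hCsum : (0:ℝ) ≤ ∑ i, ∑ j, |P i j| :=
    Finset.sum_nonneg fun i _ => Finset.sum_nonneg fun j _ => abs_nonneg _
  have hCuppos : 0 < Cup := by rw [hCupdef]; linarith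
  have hupper : ∀ z : Fin n → ℝ, lyapV P z ≤ Cup * ‖z‖ ^ 2 := by
    intro z
    calc lyapV P z ≤ (∑ i, ∑ j, |P i j|) * ‖z‖ ^ 2 := lyapV_le_const_mul P z
      _ ≤ Cup * ‖z‖ ^ 2 := by
          apply mul_le_mul_of_nonneg_right _ (sq_nonneg _)
          rw [hCupdef]; linarith
  have hstep := MM_condexp_step (μ := μ) (ℱ := ℱ) hβ hφ hs hγ hadapted h01 hmarkov hlam0 hlam1
  have hdecay := MM_integral_decay (μ := μ) (ℱ := ℱ) hβ hφ hs hγ hadapted hlampos hstep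
  -- ### pathwise bound
  have hpath : ∀ (x₀ : Fin n → ℝ) (τω : ℕ → ℕ) (xω : ℕ → Fin n → ℝ) (lω : ℕ → ℝ),
      (∀ i, lω i = 0 ∨ lω i = 1) →
      IsEventTriggeredLoop A B K P β θ lω x₀ τω xω →
      ∀ t, lyapV P (xω t) ≤ φ * (Real.exp (∑ j ∈ Finset.range
            (Nat.findGreatest (fun k => τω k ≤ t) t), logcF β φ (lω j)) * lyapV P x₀)
        ∧ t < θ * (Nat.findGreatest (fun k => τω k ≤ t) t + 1) := by
    intro x₀ τω xω lω hl hloop t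
    obtain ⟨hstruct, hstepV, hbetween⟩ := loop_V_bounds hP hβ hφ hLMI1 hLMI2 hθ hl hloop
    have hτ0 := hloop.1
    have hx0 := hloop.2.1
    have hprod := loop_V_prod (V := lyapV P) (lyapV_nonneg hP.posSemidef) hβ.1 hφpos
      hτ0 hx0 hstepV
    set i := Nat.findGreatest (fun k => τω k ≤ t) t with hidef
    have hfg := findGreatest_tau hτ0 (fun i => (hstruct i).1) t
    have h1 : lyapV P (xω t) ≤ φ * lyapV P (xω (τω i)) :=
      hbetween i t hfg.1 (le_of_lt hfg.2)
    have h2 := hprod i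
    have h3 : (∏ j ∈ Finset.range i, (if lω j = 0 then β else φ))
        = Real.exp (∑ j ∈ Finset.range i, logcF β φ (lω j)) := by
      rw [Real.exp_sum]
      refine Finset.prod_congr rfl fun j _ => ?_
      unfold logcF
      split
      · rw [Real.exp_log hβ.1]
      · rw [Real.exp_log hφpos]
    constructor
    · calc lyapV P (xω t) ≤ φ * lyapV P (xω (τω i)) := h1
        _ ≤ φ * ((∏ j ∈ Finset.range i, (if lω j = 0 then β else φ)) * lyapV P x₀) :=
            mul_le_mul_of_nonneg_left h2 hφpos.le
        _ = φ * (Real.exp (∑ j ∈ Finset.range i, logcF β φ (lω j)) * lyapV P x₀) := by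
            rw [h3]
    · have hub := tau_upper hτ0 (fun k => (hstruct k).2) (i + 1)
      show t < θ * (i + 1)
      exact lt_of_lt_of_le hfg.2 hub
  constructor
  -- ### Part (i): stability in probability
  · intro ε hε pbar hpbar
    have h1lam : 0 < 1 - lam := by linarith
    obtain ⟨T, hTeq, hT⟩ : ∃ T : ℝ, T = Real.exp (s * γ) / ((1 - lam) * pbar) ∧ 0 < T :=
      ⟨_, rfl, by positivity⟩
    obtain ⟨r, hreq, hr⟩ : ∃ r : ℝ, r = Real.exp (Real.log T / s + 1) ∧ 0 < r :=
      ⟨_, rfl, Real.exp_pos _⟩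
    obtain ⟨a, haeq, ha⟩ : ∃ a : ℝ, a = Real.exp (s * Real.log r) ∧ 0 < a :=
      ⟨_, rfl, Real.exp_pos _⟩
    have haT : T < a := by
      rw [haeq, hreq, Real.log_exp]
      have heq : s * (Real.log T / s + 1) = Real.log T + s := by field_simp
      rw [heq, Real.exp_add, Real.exp_log hT]
      nlinarith [Real.add_one_le_exp s, mul_pos hT hs]
    have hδarg : 0 < c * ε ^ 2 / (φ * Cup * r) := by positivity
    obtain ⟨δ, hδeq, hδ⟩ : ∃ δ : ℝ, δ = Real.sqrt (c * ε ^ 2 / (φ * Cup * r)) ∧ 0 < δ :=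
      ⟨_, rfl, Real.sqrt_pos.mpr hδarg⟩
    have hδ2 : δ ^ 2 = c * ε ^ 2 / (φ * Cup * r) := by
      rw [hδeq]; exact Real.sq_sqrt hδarg.le
    refine ⟨δ, hδ, ?_⟩
    intro x₀ τ x hx₀ hloopAll
    -- event inclusion
    have hincl : {ω | ∃ t : ℕ, ε < ‖x ω t‖}
        ⊆ ⋃ i : ℕ, {ω | a ≤ MM β φ s γ l i ω} := by
      intro ω hω
      obtain ⟨t, ht⟩ := hω
      set i := Nat.findGreatest (fun k => τ ω k ≤ t) t with hidef
      have hp := (hpath x₀ (τ ω) (x ω) (fun j => l j ω) (fun j => h01 j ω) (hloopAll ω) t).1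
      obtain ⟨E, hEeq, hEpos⟩ : ∃ E : ℝ,
          E = Real.exp (∑ j ∈ Finset.range i, logcF β φ (l j ω)) ∧ 0 < E :=
        ⟨_, rfl, Real.exp_pos _⟩
      rw [show Real.exp (∑ j ∈ Finset.range i, logcF β φ (l j ω)) = E from hEeq.symm] at hp
      have hV1 : c * ε ^ 2 < lyapV P (x ω t) := by
        have h1 : ε ^ 2 < ‖x ω t‖ ^ 2 := by nlinarith [norm_nonneg (x ω t)]
        have h2 := hlow (x ω t)
        nlinarith
      have hV0 : lyapV P x₀ ≤ Cup * δ ^ 2 := by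
        have h1 : ‖x₀‖ ^ 2 ≤ δ ^ 2 := by nlinarith [norm_nonneg x₀]
        calc lyapV P x₀ ≤ Cup * ‖x₀‖ ^ 2 := hupper x₀
          _ ≤ Cup * δ ^ 2 := mul_le_mul_of_nonneg_left h1 hCuppos.le
      have hchain : c * ε ^ 2 < φ * Cup * δ ^ 2 * E := by
        calc c * ε ^ 2 < lyapV P (x ω t) := hV1
          _ ≤ φ * (E * lyapV P x₀) := hp
          _ ≤ φ * (E * (Cup * δ ^ 2)) := by
              apply mul_le_mul_of_nonneg_left _ hφpos.le
              exact mul_le_mul_of_nonneg_left hV0 hEpos.le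
          _ = φ * Cup * δ ^ 2 * E := by ring
      have hδ2' : φ * Cup * δ ^ 2 = c * ε ^ 2 / r := by
        rw [hδ2]; field_simp
      have hrE : r < E := by
        rw [hδ2'] at hchain
        have hce : 0 < c * ε ^ 2 := by positivity
        rw [div_mul_eq_mul_div, lt_div_iff₀ hr] at hchain
        nlinarith
      have haE : a ≤ Real.exp (s * ∑ j ∈ Finset.range i, logcF β φ (l j ω)) := by
        rw [haeq]
        apply Real.exp_le_exp.mpr
        apply mul_le_mul_of_nonneg_left _ hs.le
        have hlt := Real.log_lt_log hr hrE
        rw [hEeq, Real.log_exp] at hlt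
        exact hlt.le
      refine Set.mem_iUnion.mpr ⟨i, ?_⟩
      have hwf1 : (1:ℝ) ≤ wF s γ (l i ω) := by
        unfold wF
        split
        · exact le_rfl
        · exact Real.one_le_exp (by positivity)
      have : a ≤ MM β φ s γ l i ω := by
        unfold MM
        calc a ≤ Real.exp (s * ∑ j ∈ Finset.range i, logcF β φ (l j ω)) := haE
          _ = Real.exp (s * ∑ j ∈ Finset.range i, logcF β φ (l j ω)) * 1 := (mul_one _).symm
          _ ≤ Real.exp (s * ∑ j ∈ Finset.range i, logcF β φ (l j ω)) * wF s γ (l i ω) :=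
              mul_le_mul_of_nonneg_left hwf1 (Real.exp_pos _).le
      exact this
    -- measure bound
    have hbound : μ {ω | ∃ t : ℕ, ε < ‖x ω t‖}
        ≤ ENNReal.ofReal ((1 - lam)⁻¹ * (Real.exp (s * γ) / a)) := by
      calc μ {ω | ∃ t : ℕ, ε < ‖x ω t‖}
          ≤ μ (⋃ i : ℕ, {ω | a ≤ MM β φ s γ l i ω}) := measure_mono hincl
        _ ≤ ∑' i : ℕ, μ {ω | a ≤ MM β φ s γ l i ω} := measure_iUnion_le _
        _ ≤ ∑' i : ℕ, ENNReal.ofReal (lam ^ i * (Real.exp (s * γ) / a)) :=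
            ENNReal.tsum_le_tsum fun i =>
              MM_tail hβ hφ hs hγ hadapted hlampos hdecay a ha i
        _ = ENNReal.ofReal (∑' i : ℕ, lam ^ i * (Real.exp (s * γ) / a)) :=
            (ENNReal.ofReal_tsum_of_nonneg (fun i => by positivity)
              ((summable_geometric_of_lt_one hlampos.le hlamlt).mul_right _)).symm
        _ = ENNReal.ofReal ((1 - lam)⁻¹ * (Real.exp (s * γ) / a)) := by
            rw [tsum_mul_right, tsum_geometric_of_lt_one hlampos.le hlamlt]
    refine lt_of_le_of_lt hbound ?_
    rw [ENNReal.ofReal_lt_ofReal_iff hpbar]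
    have h1lam : 0 < 1 - lam := by linarith
    rw [hTeq] at haT
    rw [div_lt_iff₀ (by positivity : (0:ℝ) < (1 - lam) * pbar)] at haT
    have hgoal : Real.exp (s * γ) / a < (1 - lam) * pbar := by
      rw [div_lt_iff₀ ha]
      nlinarith
    calc (1 - lam)⁻¹ * (Real.exp (s * γ) / a)
        < (1 - lam)⁻¹ * ((1 - lam) * pbar) := by
          apply mul_lt_mul_of_pos_left hgoal (by positivity)
      _ = pbar := by field_simp
  -- ### Part (ii): almost sure convergence
  · intro x₀ τ x hloopAll
    have haetendsto := MM_ae_tendsto (μ := μ) (ℱ := ℱ) hβ hφ hs hγ hadapted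
      hlampos hlamlt hdecay
    filter_upwards [haetendsto] with ω hω
    have hexp := exp_sum_tendsto (l := l) (ω := ω) hβ hφ hs hγ hω
    have hpathω := fun t => hpath x₀ (τ ω) (x ω) (fun j => l j ω) (fun j => h01 j ω)
      (hloopAll ω) t
    set IT : ℕ → ℕ := fun t => Nat.findGreatest (fun k => τ ω k ≤ t) t with hITdef
    have hITtend : Tendsto IT atTop atTop := by
      rw [tendsto_atTop_atTop]
      intro b
      refine ⟨θ * (b + 1), fun t htb => ?_⟩
      have h2 := (hpathω t).2
      have hθpos : 0 < θ := hθ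
      have h3 : θ * (b + 1) < θ * (IT t + 1) := lt_of_le_of_lt htb h2
      have h4 : b + 1 < IT t + 1 := Nat.lt_of_mul_lt_mul_left h3
      omega
    have hVt : Tendsto (fun t => lyapV P (x ω t)) atTop (nhds 0) := by
      apply squeeze_zero (fun t => lyapV_nonneg hP.posSemidef _)
        (fun t => (hpathω t).1)
      have h1 : Tendsto (fun t => Real.exp (∑ j ∈ Finset.range (IT t),
          logcF β φ (l j ω))) atTop (nhds 0) := hexp.comp hITtend
      have h2 := (h1.mul_const (lyapV P x₀)).const_mul φ
      simpa using h2
    have hnormle : ∀ t, ‖x ω t‖ ≤ Real.sqrt (lyapV P (x ω t) / c) := by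
      intro t
      have h1 : ‖x ω t‖ ^ 2 ≤ lyapV P (x ω t) / c := by
        rw [le_div_iff₀ hc]
        have := hlow (x ω t)
        nlinarith
      calc ‖x ω t‖ = Real.sqrt (‖x ω t‖ ^ 2) := (Real.sqrt_sq (norm_nonneg _)).symm
        _ ≤ Real.sqrt (lyapV P (x ω t) / c) := Real.sqrt_le_sqrt h1
    apply squeeze_zero (fun t => norm_nonneg _) hnormle
    have h3 : Tendsto (fun t => lyapV P (x ω t) / c) atTop (nhds 0) := by
      have := hVt.div_const c
      simpa using this
    have h4 := (Real.continuous_sqrt.tendsto 0).comp h3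
    simpa [Function.comp_def] using h4
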